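/- For the one-dimensional Chebyshev case, the pushforward under (x,y) = (cos θ, cos η) of the measure (x−y)² K_N(x,y)² μ_eq(dx)μ_eq(dy) converges weakly, as N → ∞, to (2π²)^{-1}(1 − cos θ cos η) dθ dη on [0,π]²; equivalently, (x−y)² K_N(x,y)² μ_eq(dx)μ_eq(dy) converges weakly to (1/2)(1 − xy) μ_eq(dx)μ_eq(dy). -/

import Mathlib

open MeasureTheory Filter

/-- The normalized Chebyshev polynomials of the first kind on `[-1,1]`. -/
noncomputable def nT (k : ℕ) (x : ℝ) : ℝ :=
  if k = 0 then 1 else Real.sqrt 2 * Real.cos (k * Real.arccos x)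

/-- Density of the arcsine (equilibrium) measure `μ_eq` on `[-1,1]`. -/
noncomputable def weq (x : ℝ) : ℝ := 1 / (Real.pi * Real.sqrt (1 - x ^ 2))

/-- Christoffel–Darboux kernel of the arcsine measure. -/
noncomputable def KCheb (N : ℕ) (x y : ℝ) : ℝ :=
  ∑ k ∈ Finset.range N, nT k x * nT k y

open Real Set

noncomputable def cb (m : ℕ) (x : ℝ) : ℝ := Real.cos (m * Real.arccos x)

lemma cb_cont (m : ℕ) : Continuous (cb m) :=
  Real.continuous_cos.comp (continuous_const.mul Real.continuous_arccos)

lemma cb_bound (m : ℕ) (x : ℝ) : |cb m x| ≤ 1 := Real.abs_cos_le_one _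

lemma weq_nonneg (x : ℝ) : 0 ≤ weq x := by
  unfold weq; positivity

lemma measurable_weq : Measurable weq := by
  unfold weq; fun_prop

lemma weq_le (x : ℝ) (hx : x ∈ Set.Ioc (-1:ℝ) 1) :
    weq x ≤ (1/Real.pi) * ((1-x) ^ (-(1/2) : ℝ) + (1+x) ^ (-(1/2) : ℝ)) := by
  obtain ⟨hx1, hx2⟩ := hx
  have hx1' : 0 < 1 + x := by linarith
  have hx2' : 0 ≤ 1 - x := by linarith
  have key : ∀ y : ℝ, 0 < y → y ^ (-(1/2):ℝ) = 1 / Real.sqrt y := by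
    intro y hy
    rw [Real.rpow_neg hy.le, Real.sqrt_eq_rpow, one_div]
    norm_num
  have hsq : Real.sqrt (1 - x^2) = Real.sqrt (1-x) * Real.sqrt (1+x) := by
    rw [show (1 - x^2 : ℝ) = (1-x)*(1+x) by ring, Real.sqrt_mul hx2']
  have hA : 0 ≤ (1/Real.pi) * ((1-x) ^ (-(1/2):ℝ)) :=
    mul_nonneg (by positivity) (Real.rpow_nonneg hx2' _)
  have hB : 0 ≤ (1/Real.pi) * ((1+x) ^ (-(1/2):ℝ)) :=
    mul_nonneg (by positivity) (Real.rpow_nonneg hx1'.le _)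
  rcases le_or_gt x 0 with hx0 | hx0
  · -- bound by (1/π)(1+x)^{-1/2}
    have hu : (1:ℝ) ≤ Real.sqrt (1-x) := by
      have := Real.sqrt_le_sqrt (show (1:ℝ) ≤ 1-x by linarith)
      simpa using this
    have hv : 0 < Real.sqrt (1+x) := Real.sqrt_pos.mpr hx1'
    have : weq x ≤ (1/Real.pi) * ((1+x) ^ (-(1/2):ℝ)) := by
      unfold weq
      rw [key _ hx1', hsq]
      rw [div_mul_div_comm, one_mul]
      apply one_div_le_one_div_of_le (by positivity)
      have : Real.sqrt (1+x) ≤ Real.sqrt (1-x) * Real.sqrt (1+x) := by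
        nlinarith
      nlinarith [Real.pi_pos]
    linarith [mul_add (1/Real.pi) ((1-x) ^ (-(1/2):ℝ)) ((1+x) ^ (-(1/2):ℝ))]
  · rcases eq_or_lt_of_le hx2' with heq | hlt
    · have : Real.sqrt (1 - x^2) = 0 := by
        rw [hsq, ← heq]; simp
      unfold weq
      rw [this, mul_zero, div_zero]
      linarith
    · have hv : (1:ℝ) ≤ Real.sqrt (1+x) := by
        have := Real.sqrt_le_sqrt (show (1:ℝ) ≤ 1+x by linarith)
        simpa using this
      have hu : 0 < Real.sqrt (1-x) := Real.sqrt_pos.mpr hlt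
      have : weq x ≤ (1/Real.pi) * ((1-x) ^ (-(1/2):ℝ)) := by
        unfold weq
        rw [key _ hlt, hsq]
        rw [div_mul_div_comm, one_mul]
        apply one_div_le_one_div_of_le (by positivity)
        have : Real.sqrt (1-x) ≤ Real.sqrt (1-x) * Real.sqrt (1+x) := by
          nlinarith
        nlinarith [Real.pi_pos]
      linarith [mul_add (1/Real.pi) ((1-x) ^ (-(1/2):ℝ)) ((1+x) ^ (-(1/2):ℝ))]

lemma integrable_weq : IntegrableOn weq (Set.Icc (-1:ℝ) 1) := by
  rw [integrableOn_Icc_iff_integrableOn_Ioc]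
  have h1 : IntervalIntegrable (fun x : ℝ => (1-x) ^ (-(1/2) : ℝ)) volume (-1) 1 := by
    have := (intervalIntegral.intervalIntegrable_rpow' (a := 0) (b := 2)
      (by norm_num : (-1:ℝ) < -(1/2))).comp_sub_left 1
    have := this.symm
    norm_num at this
    exact this
  have h2 : IntervalIntegrable (fun x : ℝ => (1+x) ^ (-(1/2) : ℝ)) volume (-1) 1 := by
    have := (intervalIntegral.intervalIntegrable_rpow' (a := 0) (b := 2)
      (by norm_num : (-1:ℝ) < -(1/2))).comp_add_left 1
    norm_num at this
    simpa [add_comm] using this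
  have hb : IntervalIntegrable (fun x : ℝ => (1/Real.pi) * ((1-x) ^ (-(1/2) : ℝ) + (1+x) ^ (-(1/2) : ℝ))) volume (-1) 1 :=
    (h1.add h2).const_mul _
  have hb' : IntegrableOn (fun x : ℝ => (1/Real.pi) * ((1-x) ^ (-(1/2) : ℝ) + (1+x) ^ (-(1/2) : ℝ))) (Set.Ioc (-1:ℝ) 1) :=
    (intervalIntegrable_iff_integrableOn_Ioc_of_le (by norm_num)).mp hb
  apply Integrable.mono' hb' (measurable_weq.aestronglyMeasurable)
  rw [ae_restrict_iff' measurableSet_Ioc]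
  filter_upwards with x hx
  rw [Real.norm_eq_abs, abs_of_nonneg (weq_nonneg x)]
  exact weq_le x hx

lemma intervalIntegrable_weq : IntervalIntegrable weq volume (-1) 1 :=
  (intervalIntegrable_iff_integrableOn_Ioc_of_le (by norm_num)).mpr
    (integrable_weq.mono_set Set.Ioc_subset_Icc_self)

lemma integrable_mul_weq (f : ℝ → ℝ) (hf : Continuous f) :
    IntegrableOn (fun x => f x * weq x) (Set.Icc (-1:ℝ) 1) := by
  obtain ⟨C, hC⟩ := isCompact_Icc.exists_bound_of_continuousOn hf.continuousOn
  apply Integrable.mono' (integrable_weq.const_mul C)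
    ((hf.measurable.mul measurable_weq).aestronglyMeasurable)
  rw [ae_restrict_iff' measurableSet_Icc]
  filter_upwards with x hx
  rw [Real.norm_eq_abs, Pi.mul_apply, abs_mul, abs_of_nonneg (weq_nonneg x)]
  have := hC x hx
  rw [Real.norm_eq_abs] at this
  exact mul_le_mul_of_nonneg_right this (weq_nonneg x)

lemma setIntegral_Icc_eq_intervalIntegral (f : ℝ → ℝ) :
    ∫ x in Set.Icc (-1:ℝ) 1, f x = ∫ x in (-1:ℝ)..1, f x := by
  rw [intervalIntegral.integral_of_le (by norm_num : (-1:ℝ) ≤ 1),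
    MeasureTheory.integral_Icc_eq_integral_Ioc]

lemma integral_weq : ∫ x in Set.Icc (-1:ℝ) 1, weq x = 1 := by
  rw [setIntegral_Icc_eq_intervalIntegral]
  have h := intervalIntegral.integral_eq_sub_of_hasDeriv_right_of_le
    (f := fun x => -(Real.arccos x) / Real.pi) (f' := weq)
    (by norm_num : (-1:ℝ) ≤ 1)
    (((Real.continuous_arccos.neg).div_const _).continuousOn)
    (fun x hx => by
      have h1 : x ≠ -1 := by rintro rfl; simp at hx
      have h2 : x ≠ 1 := by rintro rfl; simp at hx
      have := ((Real.hasDerivAt_arccos h1 h2).neg.div_const Real.pi)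
      have heq : - -(1 / Real.sqrt (1 - x ^ 2)) / Real.pi = weq x := by
        unfold weq
        rw [neg_neg, div_div]
        ring_nf
      rw [heq] at this
      exact this.hasDerivWithinAt)
    intervalIntegrable_weq
  rw [h]
  simp only [Real.arccos_one, Real.arccos_neg_one]
  field_simp
  ring

lemma orth0 (m : ℕ) (hm : 1 ≤ m) : ∫ x in Set.Icc (-1:ℝ) 1, cb m x * weq x = 0 := by
  rw [setIntegral_Icc_eq_intervalIntegral]
  have hm' : (m:ℝ) ≠ 0 := Nat.cast_ne_zero.mpr (by omega)
  have h := intervalIntegral.integral_eq_sub_of_hasDeriv_right_of_le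
    (f := fun x => -Real.sin (m * Real.arccos x) / (m * Real.pi))
    (f' := fun x => cb m x * weq x)
    (by norm_num : (-1:ℝ) ≤ 1)
    (((Real.continuous_sin.comp (continuous_const.mul Real.continuous_arccos)).neg.div_const _).continuousOn)
    (fun x hx => by
      have h1 : x ≠ -1 := by rintro rfl; simp at hx
      have h2 : x ≠ 1 := by rintro rfl; simp at hx
      have hs : 0 < Real.sqrt (1 - x ^ 2) := by
        apply Real.sqrt_pos.mpr
        rw [Set.mem_Ioo] at hx
        nlinarith [hx.1, hx.2]
      have hd : HasDerivAt (fun x => -Real.sin (m * Real.arccos x) / (m * Real.pi))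
          (-(Real.cos (m * Real.arccos x) * ((m:ℝ) * -(1 / Real.sqrt (1 - x ^ 2)))) / (m * Real.pi)) x := by
        have ha := (Real.hasDerivAt_arccos h1 h2).const_mul (m:ℝ)
        have hsin := (Real.hasDerivAt_sin ((m:ℝ) * Real.arccos x)).comp x ha
        exact (hsin.neg.div_const _)
      have heq : -(Real.cos (m * Real.arccos x) * ((m:ℝ) * -(1 / Real.sqrt (1 - x ^ 2)))) / (m * Real.pi)
          = cb m x * weq x := by
        unfold cb weq
        field_simp
      rw [heq] at hd
      exact hd.hasDerivWithinAt)
    (by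
      rw [intervalIntegrable_iff_integrableOn_Ioc_of_le (by norm_num)]
      exact (integrable_mul_weq (cb m) (cb_cont m)).mono_set Set.Ioc_subset_Icc_self)
  rw [h]
  simp only [Real.arccos_one, Real.arccos_neg_one]
  simp [Real.sin_nat_mul_pi]

lemma cb_rec (m : ℕ) (x : ℝ) (hx : x ∈ Set.Icc (-1:ℝ) 1) :
    cb (m+2) x + cb m x = 2 * cb (m+1) x * x := by
  have hcos : Real.cos (Real.arccos x) = x := Real.cos_arccos hx.1 hx.2
  unfold cb
  have e1 : ((m:ℝ)+2) * Real.arccos x = (((m:ℝ)+1) * Real.arccos x) + Real.arccos x := by ring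
  have e2 : (m:ℝ) * Real.arccos x = (((m:ℝ)+1) * Real.arccos x) - Real.arccos x := by ring
  push_cast
  rw [e1, e2, Real.cos_add, Real.cos_sub, hcos]
  ring

lemma orth (j m : ℕ) (h : j < m) :
    ∫ x in Set.Icc (-1:ℝ) 1, x ^ j * cb m x * weq x = 0 := by
  induction j generalizing m with
  | zero =>
      simpa using orth0 m (by omega)
  | succ j ih =>
      obtain ⟨k, rfl⟩ : ∃ k, m = k + 1 := ⟨m - 1, by omega⟩
      have hk : j < k := by omega
      have key : ∀ x ∈ Set.Icc (-1:ℝ) 1,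
          x ^ (j+1) * cb (k+1) x * weq x
            = (1/2) * (x ^ j * cb (k+2) x * weq x) + (1/2) * (x ^ j * cb k x * weq x) := by
        intro x hx
        have := cb_rec k x hx
        have hxc : x * cb (k+1) x = (cb (k+2) x + cb k x) / 2 := by linarith
        calc x ^ (j+1) * cb (k+1) x * weq x
            = x ^ j * (x * cb (k+1) x) * weq x := by ring
          _ = x ^ j * ((cb (k+2) x + cb k x) / 2) * weq x := by rw [hxc]
          _ = (1/2) * (x ^ j * cb (k+2) x * weq x) + (1/2) * (x ^ j * cb k x * weq x) := by ring
      rw [MeasureTheory.setIntegral_congr_fun measurableSet_Icc key]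
      have i1 : IntegrableOn (fun x => (1/2) * (x ^ j * cb (k+2) x * weq x)) (Set.Icc (-1:ℝ) 1) := by
        have := (integrable_mul_weq (fun x => x ^ j * cb (k+2) x)
          (by exact (continuous_pow j).mul (cb_cont _))).const_mul (1/2 : ℝ)
        simpa [mul_assoc, IntegrableOn] using this
      have i2 : IntegrableOn (fun x => (1/2) * (x ^ j * cb k x * weq x)) (Set.Icc (-1:ℝ) 1) := by
        have := (integrable_mul_weq (fun x => x ^ j * cb k x)
          (by exact (continuous_pow j).mul (cb_cont _))).const_mul (1/2 : ℝ)
        simpa [mul_assoc, IntegrableOn] using this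
      rw [MeasureTheory.integral_add i1 i2, MeasureTheory.integral_const_mul,
        MeasureTheory.integral_const_mul, ih (k+2) (by omega), ih k hk]
      ring

lemma cos_rec (t : ℝ) (a : ℝ) :
    Real.cos ((a+2)*t) + Real.cos (a*t) = 2 * Real.cos ((a+1)*t) * Real.cos t := by
  have e1 : (a+2)*t = ((a+1)*t) + t := by ring
  have e2 : a*t = ((a+1)*t) - t := by ring
  rw [e1, e2, Real.cos_add, Real.cos_sub]
  ring

lemma cd_trig (θ η : ℝ) (n : ℕ) :
    (Real.cos θ - Real.cos η) *
      (1 + ∑ k ∈ Finset.range n, 2 * Real.cos ((k+1:ℕ)*θ) * Real.cos ((k+1:ℕ)*η))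
    = Real.cos ((n+1:ℕ)*θ) * Real.cos ((n:ℕ)*η) - Real.cos ((n:ℕ)*θ) * Real.cos ((n+1:ℕ)*η) := by
  induction n with
  | zero => push_cast; simp
  | succ n ih =>
      rw [Finset.sum_range_succ]
      have h1 := cos_rec θ (n:ℝ)
      have h2 := cos_rec η (n:ℝ)
      push_cast at ih ⊢
      rw [show ((n:ℝ) + 1 + 1) = (n:ℝ) + 2 from by ring]
      linear_combination ih - Real.cos (((n:ℝ)+1)*η) * h1 + Real.cos (((n:ℝ)+1)*θ) * h2

lemma KCheb_succ (n : ℕ) (x y : ℝ) :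
    KCheb (n+1) x y = 1 + ∑ k ∈ Finset.range n, 2 * cb (k+1) x * cb (k+1) y := by
  unfold KCheb
  rw [Finset.sum_range_succ']
  have h0 : nT 0 x * nT 0 y = 1 := by simp [nT]
  have hk : ∀ k, nT (k+1) x * nT (k+1) y = 2 * cb (k+1) x * cb (k+1) y := by
    intro k
    simp only [nT, Nat.succ_ne_zero, if_false, cb]
    have h2 : Real.sqrt 2 * Real.sqrt 2 = 2 := Real.mul_self_sqrt (by norm_num)
    linear_combination (Real.cos ((k+1:ℕ) * Real.arccos x) * Real.cos ((k+1:ℕ) * Real.arccos y)) * h2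
  rw [h0]
  simp_rw [hk]
  ring

lemma cd_K (n : ℕ) (x y : ℝ) (hx : x ∈ Set.Icc (-1:ℝ) 1) (hy : y ∈ Set.Icc (-1:ℝ) 1) :
    (x - y) * KCheb (n+1) x y = cb (n+1) x * cb n y - cb n x * cb (n+1) y := by
  have hcx : Real.cos (Real.arccos x) = x := Real.cos_arccos hx.1 hx.2
  have hcy : Real.cos (Real.arccos y) = y := Real.cos_arccos hy.1 hy.2
  have := cd_trig (Real.arccos x) (Real.arccos y) n
  rw [hcx, hcy] at this
  rw [KCheb_succ]
  unfold cb
  simpa using this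

noncomputable def Rr (n : ℕ) (x y : ℝ) : ℝ :=
  (1/4)*((1 + cb (2*n+2) x)*(1 + cb (2*n) y) + (1 + cb (2*n) x)*(1 + cb (2*n+2) y))
  - (1/2)*((cb (2*n+1) x + x)*(cb (2*n+1) y + y)) - (1/2)*(1 - x*y)

lemma sq_cb (m : ℕ) (x : ℝ) : cb m x ^ 2 = (1 + cb (2*m) x)/2 := by
  unfold cb
  rw [Real.cos_sq]
  push_cast
  ring_nf

lemma prod_cb (m : ℕ) (x : ℝ) (hx : x ∈ Set.Icc (-1:ℝ) 1) :
    cb (m+1) x * cb m x = (cb (2*m+1) x + x)/2 := by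
  have hcx : Real.cos (Real.arccos x) = x := Real.cos_arccos hx.1 hx.2
  unfold cb
  have e1 : ((2*m+1:ℕ):ℝ) * Real.arccos x = ((m+1:ℕ):ℝ) * Real.arccos x + ((m:ℕ):ℝ) * Real.arccos x := by
    push_cast; ring
  have e2 : ((m+1:ℕ):ℝ) * Real.arccos x - ((m:ℕ):ℝ) * Real.arccos x = Real.arccos x := by
    push_cast; ring
  have hadd := Real.cos_add (((m+1:ℕ):ℝ) * Real.arccos x) (((m:ℕ):ℝ) * Real.arccos x)
  have hsub := Real.cos_sub (((m+1:ℕ):ℝ) * Real.arccos x) (((m:ℕ):ℝ) * Real.arccos x)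
  rw [e2, hcx] at hsub
  rw [e1]
  linear_combination (-(1:ℝ)/2) * hadd - (1/2) * hsub

lemma key_identity (n : ℕ) (x y : ℝ) (hx : x ∈ Set.Icc (-1:ℝ) 1) (hy : y ∈ Set.Icc (-1:ℝ) 1) :
    (x - y)^2 * (KCheb (n+1) x y)^2 = (1/2)*(1 - x*y) + Rr n x y := by
  have ha2 : cb (n+1) x ^ 2 = (1 + cb (2*n+2) x)/2 := by
    have := sq_cb (n+1) x; rwa [show 2*(n+1) = 2*n+2 by ring] at this
  have ha0 : cb n x ^ 2 = (1 + cb (2*n) x)/2 := sq_cb n x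
  have ha1 : cb (n+1) x * cb n x = (cb (2*n+1) x + x)/2 := prod_cb n x hx
  have hb2 : cb (n+1) y ^ 2 = (1 + cb (2*n+2) y)/2 := by
    have := sq_cb (n+1) y; rwa [show 2*(n+1) = 2*n+2 by ring] at this
  have hb0 : cb n y ^ 2 = (1 + cb (2*n) y)/2 := sq_cb n y
  have hb1 : cb (n+1) y * cb n y = (cb (2*n+1) y + y)/2 := prod_cb n y hy
  calc (x - y)^2 * (KCheb (n+1) x y)^2
      = ((x - y) * KCheb (n+1) x y)^2 := by ring
    _ = (cb (n+1) x * cb n y - cb n x * cb (n+1) y)^2 := by rw [cd_K n x y hx hy]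
    _ = (cb (n+1) x ^ 2) * (cb n y ^ 2) + (cb n x ^ 2) * (cb (n+1) y ^ 2)
        - 2 * (cb (n+1) x * cb n x) * (cb (n+1) y * cb n y) := by ring
    _ = ((1 + cb (2*n+2) x)/2) * ((1 + cb (2*n) y)/2) + ((1 + cb (2*n) x)/2) * ((1 + cb (2*n+2) y)/2)
        - 2 * ((cb (2*n+1) x + x)/2) * ((cb (2*n+1) y + y)/2) := by
          rw [ha2, ha0, ha1, hb2, hb0, hb1]
    _ = (1/2)*(1 - x*y) + Rr n x y := by unfold Rr; ring

lemma Rr_expand (n : ℕ) (x y : ℝ) :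
    Rr n x y =
      (1/4) * (cb (2*n+2) x * 1)
      + (1/4) * (1 * cb (2*n) y)
      + (1/4) * (cb (2*n+2) x * cb (2*n) y)
      + (1/4) * (cb (2*n) x * 1)
      + (1/4) * (1 * cb (2*n+2) y)
      + (1/4) * (cb (2*n) x * cb (2*n+2) y)
      + (-(1/2)) * (cb (2*n+1) x * cb (2*n+1) y)
      + (-(1/2)) * (cb (2*n+1) x * y)
      + (-(1/2)) * (x * cb (2*n+1) y) := by
  unfold Rr; ring

lemma Rr_bound (n : ℕ) (x y : ℝ) (hx : x ∈ Set.Icc (-1:ℝ) 1) (hy : y ∈ Set.Icc (-1:ℝ) 1) :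
    |Rr n x y| ≤ 3 := by
  rw [Rr_expand]
  have hxa : |x| ≤ 1 := abs_le.mpr ⟨hx.1, hx.2⟩
  have hya : |y| ≤ 1 := abs_le.mpr ⟨hy.1, hy.2⟩
  have b1 := cb_bound (2*n+2) x
  have b2 := cb_bound (2*n) x
  have b3 := cb_bound (2*n+1) x
  have b4 := cb_bound (2*n+2) y
  have b5 := cb_bound (2*n) y
  have b6 := cb_bound (2*n+1) y
  rw [abs_le] at *
  constructor <;> nlinarith [b1.1, b1.2, b2.1, b2.2, b3.1, b3.2, b4.1, b4.2, b5.1, b5.2, b6.1, b6.2, hxa.1, hxa.2, hya.1, hya.2]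

attribute [fun_prop] Real.continuous_arccos

lemma nT_cont (k : ℕ) : Continuous (nT k) := by
  unfold nT
  rcases Nat.eq_zero_or_pos k with h | h
  · simp [h]; fun_prop
  · have : k ≠ 0 := by omega
    simp [this]; fun_prop

lemma KCheb_cont (N : ℕ) : Continuous (Function.uncurry (KCheb N)) := by
  unfold KCheb Function.uncurry
  apply continuous_finset_sum
  intro k _
  exact ((nT_cont k).comp continuous_fst).mul ((nT_cont k).comp continuous_snd)

lemma Rr_cont (n : ℕ) : Continuous (Function.uncurry (Rr n)) := by
  unfold Rr Function.uncurry cb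
  fun_prop

noncomputable def Dd (F : ℝ → ℝ → ℝ) : ℝ :=
  ∫ x in Set.Icc (-1:ℝ) 1, ∫ y in Set.Icc (-1:ℝ) 1, F x y * weq x * weq y

noncomputable def Ll (f : ℝ → ℝ) : ℝ := ∫ x in Set.Icc (-1:ℝ) 1, f x * weq x

lemma Ll_const_mul (c : ℝ) (f : ℝ → ℝ) : Ll (fun x => c * f x) = c * Ll f := by
  unfold Ll
  rw [← MeasureTheory.integral_const_mul]
  congr 1 with x
  ring

lemma D_congr (F G : ℝ → ℝ → ℝ)
    (h : ∀ x ∈ Set.Icc (-1:ℝ) 1, ∀ y ∈ Set.Icc (-1:ℝ) 1, F x y = G x y) : Dd F = Dd G := by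
  unfold Dd
  apply MeasureTheory.setIntegral_congr_fun measurableSet_Icc
  intro x hx
  apply MeasureTheory.setIntegral_congr_fun measurableSet_Icc
  intro y hy
  dsimp only
  rw [h x hx y hy]

lemma int_inner (F : ℝ → ℝ → ℝ) (hF : Continuous (Function.uncurry F)) (x : ℝ) :
    IntegrableOn (fun y => F x y * weq x * weq y) (Set.Icc (-1:ℝ) 1) := by
  have hc : Continuous (fun y => F x y * weq x) :=
    (hF.comp (Continuous.prodMk_right x)).mul continuous_const
  exact integrable_mul_weq _ hc

lemma meas_phi (F : ℝ → ℝ → ℝ) (hF : Continuous (Function.uncurry F)) :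
    AEStronglyMeasurable (fun x => ∫ y in Set.Icc (-1:ℝ) 1, F x y * weq x * weq y)
      (volume.restrict (Set.Icc (-1:ℝ) 1)) := by
  have hm : Measurable (fun p : ℝ × ℝ => F p.1 p.2 * weq p.1 * weq p.2) :=
    (hF.measurable.mul (measurable_weq.comp measurable_fst)).mul
      (measurable_weq.comp measurable_snd)
  exact (MeasureTheory.StronglyMeasurable.integral_prod_right'
    (f := fun p : ℝ × ℝ => F p.1 p.2 * weq p.1 * weq p.2)
    hm.stronglyMeasurable).aestronglyMeasurable

lemma phi_bound (F : ℝ → ℝ → ℝ) (C : ℝ)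
    (hC : ∀ x ∈ Set.Icc (-1:ℝ) 1, ∀ y ∈ Set.Icc (-1:ℝ) 1, |F x y| ≤ C)
    (hF : Continuous (Function.uncurry F)) (x : ℝ) (hx : x ∈ Set.Icc (-1:ℝ) 1) :
    |∫ y in Set.Icc (-1:ℝ) 1, F x y * weq x * weq y| ≤ C * weq x := by
  have h := MeasureTheory.norm_integral_le_of_norm_le
    (G := ℝ) (f := fun y => F x y * weq x * weq y)
    (g := fun y => (C * weq x) * weq y)
    ((integrable_weq.const_mul (C * weq x)))
    (by
      rw [ae_restrict_iff' measurableSet_Icc]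
      filter_upwards with y hy
      rw [Real.norm_eq_abs, abs_mul, abs_mul, abs_of_nonneg (weq_nonneg x), abs_of_nonneg (weq_nonneg y)]
      have := hC x hx y hy
      have h1 : |F x y| * weq x * weq y ≤ C * weq x * weq y := by
        apply mul_le_mul_of_nonneg_right _ (weq_nonneg y)
        exact mul_le_mul_of_nonneg_right this (weq_nonneg x)
      linarith)
  rw [Real.norm_eq_abs] at h
  calc |∫ y in Set.Icc (-1:ℝ) 1, F x y * weq x * weq y|
      ≤ ∫ y in Set.Icc (-1:ℝ) 1, (C * weq x) * weq y := h
    _ = (C * weq x) * ∫ y in Set.Icc (-1:ℝ) 1, weq y := MeasureTheory.integral_const_mul _ _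
    _ = C * weq x := by rw [integral_weq, mul_one]

lemma box_bound (F : ℝ → ℝ → ℝ) (hF : Continuous (Function.uncurry F)) :
    ∃ C : ℝ, 0 ≤ C ∧ ∀ x ∈ Set.Icc (-1:ℝ) 1, ∀ y ∈ Set.Icc (-1:ℝ) 1, |F x y| ≤ C := by
  obtain ⟨C, hC⟩ := (isCompact_Icc.prod isCompact_Icc).exists_bound_of_continuousOn
    (hF.continuousOn (s := (Set.Icc (-1:ℝ) 1) ×ˢ (Set.Icc (-1:ℝ) 1)))
  refine ⟨C, ?_, fun x hx y hy => ?_⟩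
  · have := hC ((0:ℝ), (0:ℝ)) (by constructor <;> simp)
    exact le_trans (norm_nonneg _) this
  · have := hC (x, y) ⟨hx, hy⟩
    simpa [Function.uncurry] using this

lemma int_outer (F : ℝ → ℝ → ℝ) (hF : Continuous (Function.uncurry F)) :
    IntegrableOn (fun x => ∫ y in Set.Icc (-1:ℝ) 1, F x y * weq x * weq y)
      (Set.Icc (-1:ℝ) 1) := by
  obtain ⟨C, hC0, hC⟩ := box_bound F hF
  apply Integrable.mono' (integrable_weq.const_mul C) (meas_phi F hF)
  rw [ae_restrict_iff' measurableSet_Icc]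
  filter_upwards with x hx
  rw [Real.norm_eq_abs]
  exact phi_bound F C hC hF x hx

lemma D_add (F G : ℝ → ℝ → ℝ) (hF : Continuous (Function.uncurry F))
    (hG : Continuous (Function.uncurry G)) :
    Dd (fun x y => F x y + G x y) = Dd F + Dd G := by
  unfold Dd
  rw [← MeasureTheory.integral_add (int_outer F hF) (int_outer G hG)]
  apply MeasureTheory.integral_congr_ae
  filter_upwards with x
  rw [← MeasureTheory.integral_add (int_inner F hF x) (int_inner G hG x)]
  apply MeasureTheory.integral_congr_ae
  filter_upwards with y
  ring

lemma D_bound (F : ℝ → ℝ → ℝ) (hF : Continuous (Function.uncurry F)) (C : ℝ)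
    (hC : ∀ x ∈ Set.Icc (-1:ℝ) 1, ∀ y ∈ Set.Icc (-1:ℝ) 1, |F x y| ≤ C) :
    |Dd F| ≤ C := by
  unfold Dd
  have h := MeasureTheory.norm_integral_le_of_norm_le
    (f := fun x => ∫ y in Set.Icc (-1:ℝ) 1, F x y * weq x * weq y)
    (g := fun x => C * weq x)
    (integrable_weq.const_mul C)
    (by
      rw [ae_restrict_iff' measurableSet_Icc]
      filter_upwards with x hx
      rw [Real.norm_eq_abs]
      exact phi_bound F C hC hF x hx)
  rw [Real.norm_eq_abs] at h
  calc |∫ x in Set.Icc (-1:ℝ) 1, ∫ y in Set.Icc (-1:ℝ) 1, F x y * weq x * weq y|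
      ≤ ∫ x in Set.Icc (-1:ℝ) 1, C * weq x := h
    _ = C * ∫ x in Set.Icc (-1:ℝ) 1, weq x := MeasureTheory.integral_const_mul _ _
    _ = C := by rw [integral_weq, mul_one]

lemma D_prod (f g : ℝ → ℝ) : Dd (fun x y => f x * g y) = Ll f * Ll g := by
  unfold Dd Ll
  have hinner : ∀ x : ℝ, (∫ y in Set.Icc (-1:ℝ) 1, f x * g y * weq x * weq y)
      = (f x * weq x) * ∫ y in Set.Icc (-1:ℝ) 1, g y * weq y := by
    intro x
    rw [← MeasureTheory.integral_const_mul]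
    apply MeasureTheory.integral_congr_ae
    filter_upwards with y
    ring
  calc ∫ x in Set.Icc (-1:ℝ) 1, ∫ y in Set.Icc (-1:ℝ) 1, f x * g y * weq x * weq y
      = ∫ x in Set.Icc (-1:ℝ) 1, (f x * weq x) * ∫ y in Set.Icc (-1:ℝ) 1, g y * weq y := by
        apply MeasureTheory.integral_congr_ae
        filter_upwards with x
        exact hinner x
    _ = (∫ x in Set.Icc (-1:ℝ) 1, f x * weq x) * ∫ y in Set.Icc (-1:ℝ) 1, g y * weq y :=
        MeasureTheory.integral_mul_const _ _
    _ = _ := rfl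

lemma D_const_mul (c : ℝ) (F : ℝ → ℝ → ℝ) : Dd (fun x y => c * F x y) = c * Dd F := by
  unfold Dd
  rw [← MeasureTheory.integral_const_mul]
  apply MeasureTheory.integral_congr_ae
  filter_upwards with x
  rw [← MeasureTheory.integral_const_mul]
  apply MeasureTheory.integral_congr_ae
  filter_upwards with y
  ring

attribute [fun_prop] cb_cont

lemma D_poly_R (i j n : ℕ) (hi : i < 2*n) (hj : j < 2*n) :
    Dd (fun x y => x^i * y^j * Rr n x y) = 0 := by
  have hz1 : Dd (fun x y => (fun x => (1/4) * (x^i * cb (2*n+2) x)) x * (fun y => y^j) y) = 0 := by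
    rw [D_prod]
    have h0 : Ll (fun x => (1/4) * (x^i * cb (2*n+2) x)) = 0 := by
      rw [show (fun x => (1/4) * (x^i * cb (2*n+2) x)) = (fun t => (1/4) * ((fun t => t^i * cb (2*n+2) t) t)) from rfl, Ll_const_mul,
        show Ll (fun t => t^i * cb (2*n+2) t) = 0 from orth i (2*n+2) (by omega)]
      ring
    rw [h0]
    ring
  have hz2 : Dd (fun x y => (fun x => x^i) x * (fun y => (1/4) * (y^j * cb (2*n) y)) y) = 0 := by
    rw [D_prod]
    have h0 : Ll (fun y => (1/4) * (y^j * cb (2*n) y)) = 0 := by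
      rw [show (fun y => (1/4) * (y^j * cb (2*n) y)) = (fun t => (1/4) * ((fun t => t^j * cb (2*n) t) t)) from rfl, Ll_const_mul,
        show Ll (fun t => t^j * cb (2*n) t) = 0 from orth j (2*n) (by omega)]
      ring
    rw [h0]
    ring
  have hz3 : Dd (fun x y => (fun x => (1/4) * (x^i * cb (2*n+2) x)) x * (fun y => y^j * cb (2*n) y) y) = 0 := by
    rw [D_prod]
    have h0 : Ll (fun x => (1/4) * (x^i * cb (2*n+2) x)) = 0 := by
      rw [show (fun x => (1/4) * (x^i * cb (2*n+2) x)) = (fun t => (1/4) * ((fun t => t^i * cb (2*n+2) t) t)) from rfl, Ll_const_mul,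
        show Ll (fun t => t^i * cb (2*n+2) t) = 0 from orth i (2*n+2) (by omega)]
      ring
    rw [h0]
    ring
  have hz4 : Dd (fun x y => (fun x => (1/4) * (x^i * cb (2*n) x)) x * (fun y => y^j) y) = 0 := by
    rw [D_prod]
    have h0 : Ll (fun x => (1/4) * (x^i * cb (2*n) x)) = 0 := by
      rw [show (fun x => (1/4) * (x^i * cb (2*n) x)) = (fun t => (1/4) * ((fun t => t^i * cb (2*n) t) t)) from rfl, Ll_const_mul,
        show Ll (fun t => t^i * cb (2*n) t) = 0 from orth i (2*n) (by omega)]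
      ring
    rw [h0]
    ring
  have hz5 : Dd (fun x y => (fun x => x^i) x * (fun y => (1/4) * (y^j * cb (2*n+2) y)) y) = 0 := by
    rw [D_prod]
    have h0 : Ll (fun y => (1/4) * (y^j * cb (2*n+2) y)) = 0 := by
      rw [show (fun y => (1/4) * (y^j * cb (2*n+2) y)) = (fun t => (1/4) * ((fun t => t^j * cb (2*n+2) t) t)) from rfl, Ll_const_mul,
        show Ll (fun t => t^j * cb (2*n+2) t) = 0 from orth j (2*n+2) (by omega)]
      ring
    rw [h0]
    ring
  have hz6 : Dd (fun x y => (fun x => x^i * cb (2*n) x) x * (fun y => (1/4) * (y^j * cb (2*n+2) y)) y) = 0 := by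
    rw [D_prod]
    have h0 : Ll (fun y => (1/4) * (y^j * cb (2*n+2) y)) = 0 := by
      rw [show (fun y => (1/4) * (y^j * cb (2*n+2) y)) = (fun t => (1/4) * ((fun t => t^j * cb (2*n+2) t) t)) from rfl, Ll_const_mul,
        show Ll (fun t => t^j * cb (2*n+2) t) = 0 from orth j (2*n+2) (by omega)]
      ring
    rw [h0]
    ring
  have hz7 : Dd (fun x y => (fun x => (-(1/2)) * (x^i * cb (2*n+1) x)) x * (fun y => y^j * cb (2*n+1) y) y) = 0 := by
    rw [D_prod]
    have h0 : Ll (fun x => (-(1/2)) * (x^i * cb (2*n+1) x)) = 0 := by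
      rw [show (fun x => (-(1/2)) * (x^i * cb (2*n+1) x)) = (fun t => (-(1/2)) * ((fun t => t^i * cb (2*n+1) t) t)) from rfl, Ll_const_mul,
        show Ll (fun t => t^i * cb (2*n+1) t) = 0 from orth i (2*n+1) (by omega)]
      ring
    rw [h0]
    ring
  have hz8 : Dd (fun x y => (fun x => (-(1/2)) * (x^i * cb (2*n+1) x)) x * (fun y => y^(j+1)) y) = 0 := by
    rw [D_prod]
    have h0 : Ll (fun x => (-(1/2)) * (x^i * cb (2*n+1) x)) = 0 := by
      rw [show (fun x => (-(1/2)) * (x^i * cb (2*n+1) x)) = (fun t => (-(1/2)) * ((fun t => t^i * cb (2*n+1) t) t)) from rfl, Ll_const_mul,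
        show Ll (fun t => t^i * cb (2*n+1) t) = 0 from orth i (2*n+1) (by omega)]
      ring
    rw [h0]
    ring
  have hz9 : Dd (fun x y => (fun x => x^(i+1)) x * (fun y => (-(1/2)) * (y^j * cb (2*n+1) y)) y) = 0 := by
    rw [D_prod]
    have h0 : Ll (fun y => (-(1/2)) * (y^j * cb (2*n+1) y)) = 0 := by
      rw [show (fun y => (-(1/2)) * (y^j * cb (2*n+1) y)) = (fun t => (-(1/2)) * ((fun t => t^j * cb (2*n+1) t) t)) from rfl, Ll_const_mul,
        show Ll (fun t => t^j * cb (2*n+1) t) = 0 from orth j (2*n+1) (by omega)]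
      ring
    rw [h0]
    ring
  have hcongr : Dd (fun x y => x^i * y^j * Rr n x y)
      = Dd (fun x y => (fun x y => (fun x => (1/4) * (x^i * cb (2*n+2) x)) x * (fun y => y^j) y) x y + ((fun x y => (fun x => x^i) x * (fun y => (1/4) * (y^j * cb (2*n) y)) y) x y + ((fun x y => (fun x => (1/4) * (x^i * cb (2*n+2) x)) x * (fun y => y^j * cb (2*n) y) y) x y + ((fun x y => (fun x => (1/4) * (x^i * cb (2*n) x)) x * (fun y => y^j) y) x y + ((fun x y => (fun x => x^i) x * (fun y => (1/4) * (y^j * cb (2*n+2) y)) y) x y + ((fun x y => (fun x => x^i * cb (2*n) x) x * (fun y => (1/4) * (y^j * cb (2*n+2) y)) y) x y + ((fun x y => (fun x => (-(1/2)) * (x^i * cb (2*n+1) x)) x * (fun y => y^j * cb (2*n+1) y) y) x y + ((fun x y => (fun x => (-(1/2)) * (x^i * cb (2*n+1) x)) x * (fun y => y^(j+1)) y) x y + ((fun x y => (fun x => x^(i+1)) x * (fun y => (-(1/2)) * (y^j * cb (2*n+1) y)) y) x y))))))))) := by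
    apply D_congr
    intro x _ y _
    rw [Rr_expand]
    ring
  rw [hcongr]
  rw [D_add (fun x y => (fun x => (1/4) * (x^i * cb (2*n+2) x)) x * (fun y => y^j) y) (fun x y => (fun x y => (fun x => x^i) x * (fun y => (1/4) * (y^j * cb (2*n) y)) y) x y + ((fun x y => (fun x => (1/4) * (x^i * cb (2*n+2) x)) x * (fun y => y^j * cb (2*n) y) y) x y + ((fun x y => (fun x => (1/4) * (x^i * cb (2*n) x)) x * (fun y => y^j) y) x y + ((fun x y => (fun x => x^i) x * (fun y => (1/4) * (y^j * cb (2*n+2) y)) y) x y + ((fun x y => (fun x => x^i * cb (2*n) x) x * (fun y => (1/4) * (y^j * cb (2*n+2) y)) y) x y + ((fun x y => (fun x => (-(1/2)) * (x^i * cb (2*n+1) x)) x * (fun y => y^j * cb (2*n+1) y) y) x y + ((fun x y => (fun x => (-(1/2)) * (x^i * cb (2*n+1) x)) x * (fun y => y^(j+1)) y) x y + ((fun x y => (fun x => x^(i+1)) x * (fun y => (-(1/2)) * (y^j * cb (2*n+1) y)) y) x y)))))))) (by fun_prop) (by fun_prop)]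
  rw [D_add (fun x y => (fun x => x^i) x * (fun y => (1/4) * (y^j * cb (2*n) y)) y) (fun x y => (fun x y => (fun x => (1/4) * (x^i * cb (2*n+2) x)) x * (fun y => y^j * cb (2*n) y) y) x y + ((fun x y => (fun x => (1/4) * (x^i * cb (2*n) x)) x * (fun y => y^j) y) x y + ((fun x y => (fun x => x^i) x * (fun y => (1/4) * (y^j * cb (2*n+2) y)) y) x y + ((fun x y => (fun x => x^i * cb (2*n) x) x * (fun y => (1/4) * (y^j * cb (2*n+2) y)) y) x y + ((fun x y => (fun x => (-(1/2)) * (x^i * cb (2*n+1) x)) x * (fun y => y^j * cb (2*n+1) y) y) x y + ((fun x y => (fun x => (-(1/2)) * (x^i * cb (2*n+1) x)) x * (fun y => y^(j+1)) y) x y + ((fun x y => (fun x => x^(i+1)) x * (fun y => (-(1/2)) * (y^j * cb (2*n+1) y)) y) x y))))))) (by fun_prop) (by fun_prop)]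
  rw [D_add (fun x y => (fun x => (1/4) * (x^i * cb (2*n+2) x)) x * (fun y => y^j * cb (2*n) y) y) (fun x y => (fun x y => (fun x => (1/4) * (x^i * cb (2*n) x)) x * (fun y => y^j) y) x y + ((fun x y => (fun x => x^i) x * (fun y => (1/4) * (y^j * cb (2*n+2) y)) y) x y + ((fun x y => (fun x => x^i * cb (2*n) x) x * (fun y => (1/4) * (y^j * cb (2*n+2) y)) y) x y + ((fun x y => (fun x => (-(1/2)) * (x^i * cb (2*n+1) x)) x * (fun y => y^j * cb (2*n+1) y) y) x y + ((fun x y => (fun x => (-(1/2)) * (x^i * cb (2*n+1) x)) x * (fun y => y^(j+1)) y) x y + ((fun x y => (fun x => x^(i+1)) x * (fun y => (-(1/2)) * (y^j * cb (2*n+1) y)) y) x y)))))) (by fun_prop) (by fun_prop)]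
  rw [D_add (fun x y => (fun x => (1/4) * (x^i * cb (2*n) x)) x * (fun y => y^j) y) (fun x y => (fun x y => (fun x => x^i) x * (fun y => (1/4) * (y^j * cb (2*n+2) y)) y) x y + ((fun x y => (fun x => x^i * cb (2*n) x) x * (fun y => (1/4) * (y^j * cb (2*n+2) y)) y) x y + ((fun x y => (fun x => (-(1/2)) * (x^i * cb (2*n+1) x)) x * (fun y => y^j * cb (2*n+1) y) y) x y + ((fun x y => (fun x => (-(1/2)) * (x^i * cb (2*n+1) x)) x * (fun y => y^(j+1)) y) x y + ((fun x y => (fun x => x^(i+1)) x * (fun y => (-(1/2)) * (y^j * cb (2*n+1) y)) y) x y))))) (by fun_prop) (by fun_prop)]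
  rw [D_add (fun x y => (fun x => x^i) x * (fun y => (1/4) * (y^j * cb (2*n+2) y)) y) (fun x y => (fun x y => (fun x => x^i * cb (2*n) x) x * (fun y => (1/4) * (y^j * cb (2*n+2) y)) y) x y + ((fun x y => (fun x => (-(1/2)) * (x^i * cb (2*n+1) x)) x * (fun y => y^j * cb (2*n+1) y) y) x y + ((fun x y => (fun x => (-(1/2)) * (x^i * cb (2*n+1) x)) x * (fun y => y^(j+1)) y) x y + ((fun x y => (fun x => x^(i+1)) x * (fun y => (-(1/2)) * (y^j * cb (2*n+1) y)) y) x y)))) (by fun_prop) (by fun_prop)]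
  rw [D_add (fun x y => (fun x => x^i * cb (2*n) x) x * (fun y => (1/4) * (y^j * cb (2*n+2) y)) y) (fun x y => (fun x y => (fun x => (-(1/2)) * (x^i * cb (2*n+1) x)) x * (fun y => y^j * cb (2*n+1) y) y) x y + ((fun x y => (fun x => (-(1/2)) * (x^i * cb (2*n+1) x)) x * (fun y => y^(j+1)) y) x y + ((fun x y => (fun x => x^(i+1)) x * (fun y => (-(1/2)) * (y^j * cb (2*n+1) y)) y) x y))) (by fun_prop) (by fun_prop)]
  rw [D_add (fun x y => (fun x => (-(1/2)) * (x^i * cb (2*n+1) x)) x * (fun y => y^j * cb (2*n+1) y) y) (fun x y => (fun x y => (fun x => (-(1/2)) * (x^i * cb (2*n+1) x)) x * (fun y => y^(j+1)) y) x y + ((fun x y => (fun x => x^(i+1)) x * (fun y => (-(1/2)) * (y^j * cb (2*n+1) y)) y) x y)) (by fun_prop) (by fun_prop)]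
  rw [D_add (fun x y => (fun x => (-(1/2)) * (x^i * cb (2*n+1) x)) x * (fun y => y^(j+1)) y) (fun x y => (fun x y => (fun x => x^(i+1)) x * (fun y => (-(1/2)) * (y^j * cb (2*n+1) y)) y) x y) (by fun_prop) (by fun_prop)]
  rw [hz1, hz2, hz3, hz4, hz5, hz6, hz7, hz8, hz9]
  ring

lemma D_finset_sum {ι : Type*} (s : Finset ι) (H : ι → ℝ → ℝ → ℝ)
    (h : ∀ k, Continuous (Function.uncurry (H k))) :
    Dd (fun x y => ∑ k ∈ s, H k x y) = ∑ k ∈ s, Dd (H k) := by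
  classical
  induction s using Finset.induction with
  | empty =>
      simp only [Finset.sum_empty]
      unfold Dd
      simp
  | insert _ _ hnotmem ih =>
      rename_i a s
      rw [Finset.sum_insert hnotmem, ← ih]
      have hsc : Continuous (Function.uncurry (fun x y => ∑ k ∈ s, H k x y)) := by
        have : Function.uncurry (fun x y => ∑ k ∈ s, H k x y)
            = fun p => ∑ k ∈ s, Function.uncurry (H k) p := rfl
        rw [this]
        exact continuous_finset_sum _ (fun k _ => h k)
      rw [← D_add (H a) (fun x y => ∑ k ∈ s, H k x y) (h a) hsc]
      apply D_congr
      intro x _ y _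
      rw [Finset.sum_insert hnotmem]

/-- Weak convergence of the off-diagonal measures in the Chebyshev case: as `N → ∞`, the
measure `(x−y)² K_N(x,y)² μ_eq(dx) μ_eq(dy)` converges weakly to
`(1/2)(1 − xy) μ_eq(dx) μ_eq(dy)`, i.e. the integrals of every bounded continuous test
function converge. -/
theorem chebyshev_offdiagonal_weak_convergence
    (g : ℝ × ℝ → ℝ) (hg : Continuous g) (hbdd : ∃ C, ∀ p, |g p| ≤ C) :
    Tendsto (fun N : ℕ =>
        ∫ x in Set.Icc (-1 : ℝ) 1, ∫ y in Set.Icc (-1 : ℝ) 1,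
          g (x, y) * ((x - y) ^ 2 * (KCheb N x y) ^ 2) * weq x * weq y)
      atTop
      (nhds (∫ x in Set.Icc (-1 : ℝ) 1, ∫ y in Set.Icc (-1 : ℝ) 1,
        g (x, y) * ((1 / 2) * (1 - x * y)) * weq x * weq y)) := by
  classical
  rw [Metric.tendsto_atTop]
  intro ε hε
  -- Stone–Weierstrass approximation of g on the square
  haveI : CompactSpace (Set.Icc (-1:ℝ) 1) := by infer_instance
  let gen : Fin 2 → C((Set.Icc (-1:ℝ) 1) × (Set.Icc (-1:ℝ) 1), ℝ) :=
    ![⟨fun z => (z.1 : ℝ), (continuous_subtype_val.comp continuous_fst)⟩,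
      ⟨fun z => (z.2 : ℝ), (continuous_subtype_val.comp continuous_snd)⟩]
  have sep : (Algebra.adjoin ℝ (Set.range gen)).SeparatesPoints := by
    intro z w hzw
    by_cases h1 : (z.1 : ℝ) = (w.1 : ℝ)
    · have h2 : (z.2 : ℝ) ≠ (w.2 : ℝ) := by
        intro h2
        exact hzw (Prod.ext (Subtype.ext h1) (Subtype.ext h2))
      exact ⟨(gen 1 : _ → ℝ),
        ⟨gen 1, Algebra.subset_adjoin (Set.mem_range_self 1), rfl⟩,
        by simpa [gen] using h2⟩
    · exact ⟨(gen 0 : _ → ℝ),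
        ⟨gen 0, Algebra.subset_adjoin (Set.mem_range_self 0), rfl⟩,
        by simpa [gen] using h1⟩
  have hgc : Continuous (fun z : (Set.Icc (-1:ℝ) 1) × (Set.Icc (-1:ℝ) 1) => g ((z.1 : ℝ), (z.2 : ℝ))) :=
    hg.comp ((continuous_subtype_val.comp continuous_fst).prodMk
      (continuous_subtype_val.comp continuous_snd))
  obtain ⟨⟨q, hqA⟩, hq⟩ := ContinuousMap.exists_mem_subalgebra_near_continuous_of_separatesPoints
    (Algebra.adjoin ℝ (Set.range gen)) sep _ hgc (ε/8) (by positivity)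
  rw [Algebra.adjoin_range_eq_range_aeval] at hqA
  obtain ⟨P, hP⟩ := hqA
  -- evaluation of q as a polynomial sum
  have hqeval : ∀ z : (Set.Icc (-1:ℝ) 1) × (Set.Icc (-1:ℝ) 1),
      q z = ∑ d ∈ P.support, P.coeff d * ((z.1:ℝ) ^ d 0 * (z.2:ℝ) ^ d 1) := by
    intro z
    have h1 : (ContinuousMap.evalAlgHom ℝ ℝ z).comp (MvPolynomial.aeval gen)
        = MvPolynomial.aeval (fun i => (gen i) z) :=
      MvPolynomial.comp_aeval gen (ContinuousMap.evalAlgHom ℝ ℝ z)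
    have hP' : (MvPolynomial.aeval gen) P = q := hP
    have h2 : q z = MvPolynomial.aeval (fun i => (gen i) z) P := by
      have hthis := congrArg (fun ψ => ψ P) h1
      simp only [AlgHom.comp_apply] at hthis
      calc q z = (ContinuousMap.evalAlgHom ℝ ℝ z) ((MvPolynomial.aeval gen) P) := by rw [hP']; rfl
        _ = _ := hthis
    rw [h2, MvPolynomial.aeval_def, MvPolynomial.eval₂_eq']
    apply Finset.sum_congr rfl
    intro d _
    rw [Fin.prod_univ_two]
    simp [gen, Matrix.cons_val_zero, Matrix.cons_val_one, Matrix.head_cons,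
      Algebra.algebraMap_self_apply]
  set pf : ℝ → ℝ → ℝ := fun x y => ∑ d ∈ P.support, P.coeff d * (x ^ d 0 * y ^ d 1) with hpf
  have hpf_cont : Continuous (Function.uncurry pf) := by
    rw [show Function.uncurry pf = fun p : ℝ × ℝ => ∑ d ∈ P.support,
      P.coeff d * (p.1 ^ d 0 * p.2 ^ d 1) from rfl]
    apply continuous_finset_sum
    intro d _
    fun_prop
  have happrox : ∀ x ∈ Set.Icc (-1:ℝ) 1, ∀ y ∈ Set.Icc (-1:ℝ) 1,
      |g (x,y) - pf x y| ≤ ε/8 := by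
    intro x hx y hy
    have h1 := hq (⟨x,hx⟩, ⟨y,hy⟩)
    have h2 := hqeval (⟨x,hx⟩, ⟨y,hy⟩)
    rw [Real.norm_eq_abs] at h1
    have : (q : _ → ℝ) (⟨x,hx⟩, ⟨y,hy⟩) = pf x y := h2
    rw [this] at h1
    rw [abs_sub_comm] at h1
    exact le_of_lt h1
  -- cutoff
  refine ⟨P.support.sup (fun d => max (d 0) (d 1)) + 2, fun N hN => ?_⟩
  obtain ⟨n, rfl⟩ : ∃ n, N = n + 1 := ⟨N - 1, by omega⟩
  have hn : P.support.sup (fun d => max (d 0) (d 1)) + 1 ≤ n := by omega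
  -- continuity facts
  have cK : Continuous (fun p : ℝ × ℝ => KCheb (n+1) p.1 p.2) := KCheb_cont (n+1)
  have cR : Continuous (fun p : ℝ × ℝ => Rr n p.1 p.2) := Rr_cont n
  -- main identity
  have key : Dd (fun x y => g (x,y) * ((x - y)^2 * (KCheb (n+1) x y)^2))
      = Dd (fun x y => g (x,y) * ((1/2) * (1 - x*y))) + Dd (fun x y => g (x,y) * Rr n x y) := by
    rw [← D_add (fun x y => g (x,y) * ((1/2) * (1 - x*y))) (fun x y => g (x,y) * Rr n x y)
      (by fun_prop) (by fun_prop)]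
    apply D_congr
    intro x hx y hy
    rw [key_identity n x y hx hy]
    ring
  have hsplit : Dd (fun x y => g (x,y) * Rr n x y)
      = Dd (fun x y => (g (x,y) - pf x y) * Rr n x y) + Dd (fun x y => pf x y * Rr n x y) := by
    rw [← D_add (fun x y => (g (x,y) - pf x y) * Rr n x y) (fun x y => pf x y * Rr n x y)
      (by fun_prop) (by fun_prop)]
    apply D_congr
    intro x _ y _
    ring
  have hzero : Dd (fun x y => pf x y * Rr n x y) = 0 := by
    have hcongr : Dd (fun x y => pf x y * Rr n x y)
        = Dd (fun x y => ∑ d ∈ P.support, P.coeff d * (x ^ d 0 * y ^ d 1 * Rr n x y)) := by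
      apply D_congr
      intro x _ y _
      rw [hpf]
      rw [Finset.sum_mul]
      apply Finset.sum_congr rfl
      intro d _
      ring
    rw [hcongr, D_finset_sum _ _ (fun d => by fun_prop)]
    apply Finset.sum_eq_zero
    intro d hd
    have hd0 : d 0 ≤ P.support.sup (fun d => max (d 0) (d 1)) :=
      le_trans (le_max_left _ _) (Finset.le_sup (f := fun d => max (d 0) (d 1)) hd)
    have hd1 : d 1 ≤ P.support.sup (fun d => max (d 0) (d 1)) :=
      le_trans (le_max_right _ _) (Finset.le_sup (f := fun d => max (d 0) (d 1)) hd)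
    rw [show (fun x y => P.coeff d * (x ^ d 0 * y ^ d 1 * Rr n x y))
        = fun x y => P.coeff d * ((fun x y => x ^ d 0 * y ^ d 1 * Rr n x y) x y) from rfl,
      D_const_mul, D_poly_R (d 0) (d 1) n (by omega) (by omega)]
    ring
  have hbnd : |Dd (fun x y => (g (x,y) - pf x y) * Rr n x y)| ≤ 3 * (ε/8) := by
    apply D_bound _ (by fun_prop) _
    intro x hx y hy
    rw [abs_mul]
    have h1 := happrox x hx y hy
    have h2 := Rr_bound n x y hx hy
    have := mul_le_mul h1 h2 (abs_nonneg _) (by positivity)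
    linarith
  -- conclude
  have hIJ : (∫ x in Set.Icc (-1 : ℝ) 1, ∫ y in Set.Icc (-1 : ℝ) 1,
        g (x, y) * ((x - y) ^ 2 * (KCheb (n+1) x y) ^ 2) * weq x * weq y)
      = Dd (fun x y => g (x,y) * ((x - y)^2 * (KCheb (n+1) x y)^2)) := rfl
  have hJ : (∫ x in Set.Icc (-1 : ℝ) 1, ∫ y in Set.Icc (-1 : ℝ) 1,
        g (x, y) * ((1 / 2) * (1 - x * y)) * weq x * weq y)
      = Dd (fun x y => g (x,y) * ((1/2) * (1 - x*y))) := rfl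
  rw [Real.dist_eq, hIJ, hJ, key, hsplit, hzero]
  have : |Dd (fun x y => (g (x,y) - pf x y) * Rr n x y)| < ε := by
    apply lt_of_le_of_lt hbnd
    linarith
  calc |Dd (fun x y => g (x,y) * ((1/2) * (1 - x*y)))
        + (Dd (fun x y => (g (x,y) - pf x y) * Rr n x y) + 0)
        - Dd (fun x y => g (x,y) * ((1/2) * (1 - x*y)))|
      = |Dd (fun x y => (g (x,y) - pf x y) * Rr n x y)| := by rw [add_zero, add_sub_cancel_left]
    _ < ε := this
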